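/- The single-quadrant ADRT R^n : F⁺ → F⁺ is a bijection on the space F⁺ of half-strip images ℤ × Fin 2^n → ℝ whose support is bounded below in the first coordinate. -/

import Mathlib

/-- Halving of a slope index. -/
def halfIdx {m : ℕ} (s : Fin (2 ^ (m + 1))) : Fin (2 ^ m) :=
  ⟨s.val / 2, by have h1 := s.isLt; have h2 : 2 ^ (m + 1) = 2 ^ m * 2 := pow_succ 2 m; omega⟩

/-- Digital lines, defined recursively on the depth `m`.  `Dline m ℓ h s` is the
digital line of height `h` and local slope `s` in the `ℓ`-th width-`2^m` section:
`D_0⟦h,ℓ⟧ = {(h,ℓ)}`, `D_{m,ℓ}⟦h,2t⟧ = D_{m-1,2ℓ}⟦h,t⟧ ∪ D_{m-1,2ℓ+1}⟦h+t,t⟧`,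
`D_{m,ℓ}⟦h,2t+1⟧ = D_{m-1,2ℓ}⟦h,t⟧ ∪ D_{m-1,2ℓ+1}⟦h+t+1,t⟧`. -/
def Dline : (m : ℕ) → ℕ → ℤ → Fin (2 ^ m) → Finset (ℤ × ℕ)
  | 0, ℓ, h, _ => {(h, ℓ)}
  | m + 1, ℓ, h, s =>
      Dline m (2 * ℓ) h (halfIdx s) ∪
        Dline m (2 * ℓ + 1) (h + ((halfIdx s).val : ℤ) + ((s.val % 2 : ℕ) : ℤ)) (halfIdx s)

/-- The digital line `D^n_m⟦h,s⟧` with globally indexed slope `s ∈ Fin 2^n`: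
the section is `ℓ = ⌊s/2^m⌋` and the local slope is `s mod 2^m`. -/
def DlineG (n m : ℕ) (h : ℤ) (s : Fin (2 ^ n)) : Finset (ℤ × ℕ) :=
  Dline m (s.val / 2 ^ m) h ⟨s.val % 2 ^ m, Nat.mod_lt _ (Nat.two_pow_pos m)⟩

/-- Extension of an image on `ℤ × Fin 2^n` by zero to `ℤ × ℕ`. -/
def fext {n : ℕ} (f : ℤ × Fin (2 ^ n) → ℝ) : ℤ × ℕ → ℝ :=
  fun p => if h : p.2 < 2 ^ n then f (p.1, ⟨p.2, h⟩) else 0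

/-- The level-`m` single-quadrant ADRT: sum of image values over digital lines. -/
def Radon (n m : ℕ) (f : ℤ × Fin (2 ^ n) → ℝ) : ℤ × Fin (2 ^ n) → ℝ :=
  fun p => ∑ q ∈ DlineG n m p.1 p.2, fext f q

/-- The dual digital line `D'^n_m⟦i,j⟧`: the set of `(h,s)` whose digital line
passes through `(i,j)`. -/
def Ddual (n m : ℕ) (i : ℤ) (j : Fin (2 ^ n)) : Set (ℤ × Fin (2 ^ n)) :=
  {hs | (i, (j : ℕ)) ∈ DlineG n m hs.1 hs.2}

/-- The level-`m` back-projection: sum over the dual digital line. -/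
noncomputable def RadonBack (n m : ℕ) (g : ℤ × Fin (2 ^ n) → ℝ) : ℤ × Fin (2 ^ n) → ℝ :=
  fun p => ∑ᶠ q ∈ Ddual n m p.1 p.2, g q

/-- The Kronecker delta image concentrated at `(h, s)`. -/
def deltaImg {k : ℕ} (h : ℤ) (s : Fin k) : ℤ × Fin k → ℝ :=
  fun p => if p = (h, s) then 1 else 0

/-- An image on the half-strip: support bounded below in the first coordinate. -/
def BddBelowSupp {k : ℕ} (f : ℤ × Fin k → ℝ) : Prop :=
  ∃ b : ℤ, ∀ i ≤ b, ∀ j, f (i, j) = 0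

lemma pow_succ_eq (m : ℕ) : 2 ^ (m + 1) = 2 ^ m * 2 := pow_succ 2 m
def dbl0 {m : ℕ} (t : Fin (2 ^ m)) : Fin (2 ^ (m + 1)) :=
  ⟨2 * t.val, by have h := t.isLt; have h2 := pow_succ_eq m; omega⟩
def dbl1 {m : ℕ} (t : Fin (2 ^ m)) : Fin (2 ^ (m + 1)) :=
  ⟨2 * t.val + 1, by have h := t.isLt; have h2 := pow_succ_eq m; omega⟩
lemma halfIdx_dbl0 {m : ℕ} (t : Fin (2 ^ m)) : halfIdx (dbl0 t) = t := by
  apply Fin.ext; simp [halfIdx, dbl0]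
lemma halfIdx_dbl1 {m : ℕ} (t : Fin (2 ^ m)) : halfIdx (dbl1 t) = t := by
  apply Fin.ext; simp [halfIdx, dbl1]; omega
lemma dbl0_mod {m : ℕ} (t : Fin (2 ^ m)) : (dbl0 t).val % 2 = 0 := by simp [dbl0]
lemma dbl1_mod {m : ℕ} (t : Fin (2 ^ m)) : (dbl1 t).val % 2 = 1 := by
  simp [dbl1, Nat.add_mul_mod_self_left]
lemma Dline_shift (m : ℕ) (ℓ : ℕ) (h : ℤ) (s : Fin (2 ^ m)) :
    Dline m ℓ h s = (Dline m 0 h s).image (fun q => (q.1, q.2 + ℓ * 2 ^ m)) := by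
  induction m generalizing ℓ h with
  | zero => simp [Dline]
  | succ m ih =>
    rw [Dline, Dline, ih (2 * ℓ), ih (2 * ℓ + 1), ih 0, ih 1]
    simp only [Finset.image_union, Finset.image_image]
    congr 1 <;>
    · apply Finset.image_congr
      intro q _
      simp only [Function.comp_apply, Prod.mk.injEq, pow_succ_eq]
      exact ⟨trivial, by ring⟩
lemma Dline_col_lt (m : ℕ) (h : ℤ) (s : Fin (2 ^ m)) :
    ∀ q ∈ Dline m 0 h s, q.2 < 2 ^ m := by
  induction m generalizing h with
  | zero =>
    intro q hq
    simp only [Dline, Finset.mem_singleton] at hq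
    subst hq; simp
  | succ m ih =>
    intro q hq
    rw [Dline] at hq
    rcases Finset.mem_union.1 hq with hq | hq
    · have := ih _ _ _ (by simpa using hq)
      have h2 := pow_succ_eq m; omega
    · rw [show (2 * 0 + 1) = 1 by ring, Dline_shift m 1] at hq
      obtain ⟨r, hr, rfl⟩ := Finset.mem_image.1 hq
      have := ih _ _ _ hr
      have h2 := pow_succ_eq m; simp; omega
lemma DlineG_top (n : ℕ) (h : ℤ) (s : Fin (2 ^ n)) : DlineG n n h s = Dline n 0 h s := by
  have h1 : s.val / 2 ^ n = 0 := Nat.div_eq_of_lt s.isLt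
  have h2 : s.val % 2 ^ n = s.val := Nat.mod_eq_of_lt s.isLt
  simp only [DlineG, h1]
  congr 1
  exact Fin.ext h2
def splitL {m : ℕ} (f : ℤ × Fin (2 ^ (m + 1)) → ℝ) : ℤ × Fin (2 ^ m) → ℝ :=
  fun p => f (p.1, ⟨p.2.val, by have h := p.2.isLt; have h2 := pow_succ_eq m; omega⟩)
def splitR {m : ℕ} (f : ℤ × Fin (2 ^ (m + 1)) → ℝ) : ℤ × Fin (2 ^ m) → ℝ :=
  fun p => f (p.1, ⟨p.2.val + 2 ^ m, by have h := p.2.isLt; have h2 := pow_succ_eq m; omega⟩)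
def merge {m : ℕ} (g₀ g₁ : ℤ × Fin (2 ^ m) → ℝ) : ℤ × Fin (2 ^ (m + 1)) → ℝ :=
  fun p => g₀ (p.1, halfIdx p.2) +
    g₁ (p.1 + ((halfIdx p.2).val : ℤ) + ((p.2.val % 2 : ℕ) : ℤ), halfIdx p.2)
lemma Radon_zero (f : ℤ × Fin (2 ^ 0) → ℝ) : Radon 0 0 f = f := by
  funext p
  obtain ⟨h, s⟩ := p
  show ∑ q ∈ DlineG 0 0 h s, fext f q = f (h, s)
  rw [DlineG_top]
  simp only [Dline, Finset.sum_singleton, fext]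
  rw [dif_pos (by norm_num : (0:ℕ) < 2 ^ 0)]
  congr 1
  refine Prod.ext rfl (Fin.ext ?_)
  have hs := s.isLt
  simp only [pow_zero] at hs
  omega
lemma Radon_succ (m : ℕ) (f : ℤ × Fin (2 ^ (m + 1)) → ℝ) :
    Radon (m + 1) (m + 1) f = merge (Radon m m (splitL f)) (Radon m m (splitR f)) := by
  funext p
  obtain ⟨h, s⟩ := p
  show ∑ q ∈ DlineG (m + 1) (m + 1) h s, fext f q = _
  rw [DlineG_top, Dline]
  rw [show (2 * 0) = 0 by ring, show (2 * 0 + 1) = 1 by ring, Dline_shift m 1]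
  set h' : ℤ := h + ((halfIdx s).val : ℤ) + ((s.val % 2 : ℕ) : ℤ) with hh'
  rw [Finset.sum_union (by
    rw [Finset.disjoint_left]
    intro q hq hq'
    have c1 := Dline_col_lt m h (halfIdx s) q hq
    obtain ⟨r, hr, rfl⟩ := Finset.mem_image.1 hq'
    have c1' : r.2 + 1 * 2 ^ m < 2 ^ m := c1
    omega)]
  have hinj : ∀ x ∈ Dline m 0 h' (halfIdx s), ∀ y ∈ Dline m 0 h' (halfIdx s),
      (fun q : ℤ × ℕ => (q.1, q.2 + 1 * 2 ^ m)) x = (fun q : ℤ × ℕ => (q.1, q.2 + 1 * 2 ^ m)) y → x = y := by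
    intro x _ y _ hxy
    simp only [Prod.mk.injEq] at hxy
    exact Prod.ext hxy.1 (by omega)
  rw [Finset.sum_image hinj]
  have e0 : ∑ q ∈ Dline m 0 h (halfIdx s), fext f q
      = Radon m m (splitL f) (h, halfIdx s) := by
    rw [show Radon m m (splitL f) (h, halfIdx s)
        = ∑ q ∈ DlineG m m h (halfIdx s), fext (splitL f) q from rfl, DlineG_top]
    apply Finset.sum_congr rfl
    intro q hq
    have c := Dline_col_lt m h (halfIdx s) q hq
    have c2 : q.2 < 2 ^ (m + 1) := by have := pow_succ_eq m; omega
    simp only [fext, dif_pos c, dif_pos c2, splitL]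
  have e1 : ∑ q ∈ Dline m 0 h' (halfIdx s), fext f (q.1, q.2 + 1 * 2 ^ m)
      = Radon m m (splitR f) (h', halfIdx s) := by
    rw [show Radon m m (splitR f) (h', halfIdx s)
        = ∑ q ∈ DlineG m m h' (halfIdx s), fext (splitR f) q from rfl, DlineG_top]
    apply Finset.sum_congr rfl
    intro q hq
    have c := Dline_col_lt m h' (halfIdx s) q hq
    have c2 : q.2 + 1 * 2 ^ m < 2 ^ (m + 1) := by have := pow_succ_eq m; omega
    simp only [fext, dif_pos c, dif_pos c2, splitR]
    congr 1
    simp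
  rw [e0, e1]
  rfl
lemma bdd_splitL {m : ℕ} {f : ℤ × Fin (2 ^ (m + 1)) → ℝ} (hf : BddBelowSupp f) :
    BddBelowSupp (splitL f) := by
  obtain ⟨b, hb⟩ := hf
  exact ⟨b, fun i hi j => hb i hi _⟩
lemma bdd_splitR {m : ℕ} {f : ℤ × Fin (2 ^ (m + 1)) → ℝ} (hf : BddBelowSupp f) :
    BddBelowSupp (splitR f) := by
  obtain ⟨b, hb⟩ := hf
  exact ⟨b, fun i hi j => hb i hi _⟩
lemma bdd_merge {m : ℕ} {g₀ g₁ : ℤ × Fin (2 ^ m) → ℝ}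
    (h₀ : BddBelowSupp g₀) (h₁ : BddBelowSupp g₁) : BddBelowSupp (merge g₀ g₁) := by
  obtain ⟨b₀, hb₀⟩ := h₀
  obtain ⟨b₁, hb₁⟩ := h₁
  refine ⟨min b₀ b₁ - 2 ^ m, fun i hi j => ?_⟩
  have ht : (halfIdx j).val < 2 ^ m := (halfIdx j).isLt
  have hε : j.val % 2 ≤ 1 := by omega
  have hpos : 0 < 2 ^ m := Nat.two_pow_pos m
  have hd : ((2:ℤ) ^ m) = ((2 ^ m : ℕ) : ℤ) := by push_cast; ring
  simp only [merge]
  rw [hb₀ i (by omega) _, hb₁ _ (by omega) _, add_zero]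
lemma merge_inj {m : ℕ} {g₀ g₁ g₀' g₁' : ℤ × Fin (2 ^ m) → ℝ}
    (h₁ : BddBelowSupp g₁) (h₁' : BddBelowSupp g₁')
    (he : merge g₀ g₁ = merge g₀' g₁') : g₀ = g₀' ∧ g₁ = g₁' := by
  obtain ⟨b₁, hb₁⟩ := h₁
  obtain ⟨b₁', hb₁'⟩ := h₁'
  have E : ∀ (h : ℤ) (t : Fin (2 ^ m)),
      g₀ (h, t) + g₁ (h + t.val, t) = g₀' (h, t) + g₁' (h + t.val, t) := by
    intro h t
    have := congrFun he (h, dbl0 t)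
    simpa [merge, halfIdx_dbl0, dbl0_mod] using this
  have O : ∀ (h : ℤ) (t : Fin (2 ^ m)),
      g₀ (h, t) + g₁ (h + t.val + 1, t) = g₀' (h, t) + g₁' (h + t.val + 1, t) := by
    intro h t
    have := congrFun he (h, dbl1 t)
    simpa [merge, halfIdx_dbl1, dbl1_mod] using this
  have step : ∀ (i : ℤ) (t : Fin (2 ^ m)),
      g₁ (i + 1, t) - g₁' (i + 1, t) = g₁ (i, t) - g₁' (i, t) := by
    intro i t
    have hE := E (i - t.val) t
    have hO := O (i - t.val) t
    have e1 : i - (t.val : ℤ) + t.val = i := by ring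
    have e2 : i - (t.val : ℤ) + t.val + 1 = i + 1 := by ring
    rw [e1] at hE
    rw [e2] at hO
    linarith
  have g1eq : g₁ = g₁' := by
    funext p
    obtain ⟨i, t⟩ := p
    set c : ℤ := min b₁ b₁' with hc
    by_cases hi : i ≤ c
    · rw [hb₁ i (by omega) t, hb₁' i (by omega) t]
    · push_neg at hi
      have key : ∀ d : ℕ, g₁ (c + d, t) = g₁' (c + d, t) := by
        intro d
        induction d with
        | zero => simp only [Nat.cast_zero, add_zero]; rw [hb₁ c (by omega) t, hb₁' c (by omega) t]
        | succ k ihk =>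
          have hstep := step (c + k) t
          have hcast : ((k + 1 : ℕ) : ℤ) = (k : ℤ) + 1 := by push_cast; ring
          rw [hcast, ← add_assoc]
          linarith
      have hi' : i = c + ((i - c).toNat : ℤ) := by
        rw [Int.toNat_of_nonneg (by omega)]; ring
      rw [hi']
      exact key _
  constructor
  · funext p
    obtain ⟨h, t⟩ := p
    have := E h t
    rw [g1eq] at this
    linarith
  · exact g1eq
noncomputable def invR {m : ℕ} (b : ℤ) (g : ℤ × Fin (2 ^ (m + 1)) → ℝ) :
    ℤ × Fin (2 ^ m) → ℝ :=
  fun p => ∑ k ∈ Finset.Ico b (p.1 - (p.2.val : ℤ)), (g (k, dbl1 p.2) - g (k, dbl0 p.2))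
noncomputable def invL {m : ℕ} (b : ℤ) (g : ℤ × Fin (2 ^ (m + 1)) → ℝ) :
    ℤ × Fin (2 ^ m) → ℝ :=
  fun p => g (p.1, dbl0 p.2) - invR b g (p.1 + (p.2.val : ℤ), p.2)
lemma invR_step {m : ℕ} {b : ℤ} {g : ℤ × Fin (2 ^ (m + 1)) → ℝ}
    (hb : ∀ i ≤ b, ∀ j, g (i, j) = 0) (i : ℤ) (t : Fin (2 ^ m)) :
    invR b g (i + 1, t) = invR b g (i, t) + (g (i - t.val, dbl1 t) - g (i - t.val, dbl0 t)) := by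
  by_cases hc : b ≤ i - (t.val : ℤ)
  · simp only [invR]
    rw [show i + 1 - (t.val : ℤ) = (i - (t.val : ℤ)) + 1 by ring]
    have hins : Finset.Ico b (i - (t.val : ℤ) + 1) = insert (i - (t.val : ℤ)) (Finset.Ico b (i - (t.val : ℤ))) := by
      ext x; simp only [Finset.mem_Ico, Finset.mem_insert]; omega
    rw [hins, Finset.sum_insert (by simp), add_comm]
  · push_neg at hc
    have h1 : Finset.Ico b (i - (t.val : ℤ)) = ∅ := Finset.Ico_eq_empty (by omega)
    have h2 : Finset.Ico b (i + 1 - (t.val : ℤ)) = ∅ := Finset.Ico_eq_empty (by omega)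
    have h3 := hb (i - t.val) (by omega) (dbl1 t)
    have h4 := hb (i - t.val) (by omega) (dbl0 t)
    simp only [invR]
    rw [h1, h2, h3, h4]
    simp
lemma bdd_invR {m : ℕ} {b : ℤ} {g : ℤ × Fin (2 ^ (m + 1)) → ℝ} :
    BddBelowSupp (invR b g) := by
  refine ⟨b, fun i hi t => ?_⟩
  have : Finset.Ico b (i - (t.val : ℤ)) = ∅ := Finset.Ico_eq_empty (by
    have : (0:ℤ) ≤ (t.val : ℤ) := Int.ofNat_nonneg _
    omega)
  show (∑ k ∈ Finset.Ico b (i - (t.val : ℤ)), _) = 0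
  rw [this]
  simp
lemma bdd_invL {m : ℕ} {b : ℤ} {g : ℤ × Fin (2 ^ (m + 1)) → ℝ}
    (hb : ∀ i ≤ b, ∀ j, g (i, j) = 0) : BddBelowSupp (invL b g) := by
  refine ⟨b, fun i hi t => ?_⟩
  show g (i, dbl0 t) - invR b g (i + (t.val : ℤ), t) = 0
  have h1 : Finset.Ico b (i + (t.val : ℤ) - (t.val : ℤ)) = ∅ :=
    Finset.Ico_eq_empty (by omega)
  have h2 : invR b g (i + (t.val : ℤ), t) = 0 := by
    show (∑ k ∈ Finset.Ico b (i + (t.val : ℤ) - (t.val : ℤ)), _) = 0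
    rw [h1]; simp
  rw [hb i hi _, h2, sub_zero]
lemma merge_inv {m : ℕ} {b : ℤ} {g : ℤ × Fin (2 ^ (m + 1)) → ℝ}
    (hb : ∀ i ≤ b, ∀ j, g (i, j) = 0) :
    merge (invL b g) (invR b g) = g := by
  funext p
  obtain ⟨h, s⟩ := p
  set t : Fin (2 ^ m) := halfIdx s with hts
  show invL b g (h, t) + invR b g (h + (t.val : ℤ) + ((s.val % 2 : ℕ) : ℤ), t) = g (h, s)
  rcases Nat.mod_two_eq_zero_or_one s.val with hε | hε
  · have hs : dbl0 t = s := by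
      apply Fin.ext
      simp only [dbl0, hts, halfIdx]
      omega
    rw [hε]
    show invL b g (h, t) + invR b g (h + (t.val : ℤ) + ((0:ℕ):ℤ), t) = g (h, s)
    rw [show h + (t.val : ℤ) + ((0:ℕ):ℤ) = h + (t.val : ℤ) by simp]
    show g (h, dbl0 t) - invR b g (h + (t.val : ℤ), t) + invR b g (h + (t.val : ℤ), t) = g (h, s)
    rw [hs]; ring
  · have hs : dbl1 t = s := by
      apply Fin.ext
      simp only [dbl1, hts, halfIdx]
      omega
    rw [hε]
    show invL b g (h, t) + invR b g (h + (t.val : ℤ) + ((1:ℕ):ℤ), t) = g (h, s)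
    rw [show h + (t.val : ℤ) + ((1:ℕ):ℤ) = (h + (t.val : ℤ)) + 1 by simp]
    rw [invR_step hb]
    rw [show h + (t.val : ℤ) - (t.val : ℤ) = h by ring]
    show g (h, dbl0 t) - invR b g (h + (t.val : ℤ), t) + _ = g (h, s)
    rw [hs]; ring
def combine {m : ℕ} (f₀ f₁ : ℤ × Fin (2 ^ m) → ℝ) : ℤ × Fin (2 ^ (m + 1)) → ℝ :=
  fun p => if h : p.2.val < 2 ^ m then f₀ (p.1, ⟨p.2.val, h⟩)
    else f₁ (p.1, ⟨p.2.val - 2 ^ m, by have h1 := p.2.isLt; have h2 := pow_succ_eq m; omega⟩)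
lemma splitL_combine {m : ℕ} (f₀ f₁ : ℤ × Fin (2 ^ m) → ℝ) :
    splitL (combine f₀ f₁) = f₀ := by
  funext p
  obtain ⟨h, j⟩ := p
  simp only [splitL, combine]
  rw [dif_pos j.isLt]
lemma splitR_combine {m : ℕ} (f₀ f₁ : ℤ × Fin (2 ^ m) → ℝ) :
    splitR (combine f₀ f₁) = f₁ := by
  funext p
  obtain ⟨h, j⟩ := p
  simp only [splitR, combine]
  rw [dif_neg (by omega)]
  congr 1
  refine Prod.ext rfl (Fin.ext ?_)
  simp
lemma combine_split {m : ℕ} (f : ℤ × Fin (2 ^ (m + 1)) → ℝ) :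
    combine (splitL f) (splitR f) = f := by
  funext p
  obtain ⟨h, j⟩ := p
  simp only [combine, splitL, splitR]
  by_cases hj : j.val < 2 ^ m
  · rw [dif_pos hj]
  · rw [dif_neg hj]
    congr 1
    refine Prod.ext rfl (Fin.ext ?_)
    have h1 := j.isLt
    have h2 := pow_succ_eq m
    simp
    omega
lemma bdd_combine {m : ℕ} {f₀ f₁ : ℤ × Fin (2 ^ m) → ℝ}
    (h₀ : BddBelowSupp f₀) (h₁ : BddBelowSupp f₁) : BddBelowSupp (combine f₀ f₁) := by
  obtain ⟨b₀, hb₀⟩ := h₀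
  obtain ⟨b₁, hb₁⟩ := h₁
  refine ⟨min b₀ b₁, fun i hi j => ?_⟩
  simp only [combine]
  by_cases hj : j.val < 2 ^ m
  · rw [dif_pos hj]; exact hb₀ i (by omega) _
  · rw [dif_neg hj]; exact hb₁ i (by omega) _

/-- The single-quadrant ADRT `R^n` is a bijection from the space of half-strip
images onto itself. -/
theorem Radon_bijOn (n : ℕ) :
    Set.BijOn (Radon n n)
      {f : ℤ × Fin (2 ^ n) → ℝ | BddBelowSupp f}
      {f : ℤ × Fin (2 ^ n) → ℝ | BddBelowSupp f} := by
  induction n with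
  | zero =>
    have h : Radon 0 0 = id := funext Radon_zero
    rw [h]
    exact Set.bijOn_id _
  | succ m ih =>
    refine ⟨?_, ?_, ?_⟩
    · intro f hf
      rw [Set.mem_setOf_eq] at hf ⊢
      rw [Radon_succ]
      exact bdd_merge (ih.mapsTo (bdd_splitL hf)) (ih.mapsTo (bdd_splitR hf))
    · intro f hf f' hf' he
      rw [Set.mem_setOf_eq] at hf hf'
      rw [Radon_succ, Radon_succ] at he
      obtain ⟨e0, e1⟩ := merge_inj (ih.mapsTo (bdd_splitR hf)) (ih.mapsTo (bdd_splitR hf')) he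
      have h0 := ih.injOn (bdd_splitL hf) (bdd_splitL hf') e0
      have h1 := ih.injOn (bdd_splitR hf) (bdd_splitR hf') e1
      calc f = combine (splitL f) (splitR f) := (combine_split f).symm
        _ = combine (splitL f') (splitR f') := by rw [h0, h1]
        _ = f' := combine_split f'
    · intro g hg
      rw [Set.mem_setOf_eq] at hg
      obtain ⟨b, hb⟩ := hg
      obtain ⟨f₀, hf₀mem, hf₀⟩ := ih.surjOn (bdd_invL hb : (invL b g) ∈ _)
      obtain ⟨f₁, hf₁mem, hf₁⟩ := ih.surjOn (bdd_invR : (invR b g) ∈ _)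
      refine ⟨combine f₀ f₁, bdd_combine hf₀mem hf₁mem, ?_⟩
      rw [Radon_succ, splitL_combine, splitR_combine, hf₀, hf₁]
      exact merge_inv hb
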